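/- If the base distance is identically zero, d(·,·) = 0, the LP graph GOSPA distance reduces to d̃^{(c,ε)}(X,Y) = min_{W∈𝒲̄_{X,Y}} ( (c^p/2)(Σ_{i=1}^{n_X} W(i, n_Y+1) + Σ_{j=1}^{n_Y} W(n_X+1, j)) + e_{X,Y}(W)^p )^{1/p}, and d̃^{(c,ε)} is a pseudometric on graphs: (i) d̃^{(c,ε)}(X,X) = 0; (ii) d̃^{(c,ε)}(X,Y) = d̃^{(c,ε)}(Y,X); (iii) d̃^{(c,ε)}(X,Y) ≤ d̃^{(c,ε)}(X,Z) + d̃^{(c,ε)}(Z,Y). -/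

import Mathlib

open scoped BigOperators Matrix

namespace GraphGOSPA

/-- An undirected unweighted graph without node attributes: a number of nodes
together with a symmetric `{0,1}`-valued adjacency matrix with zero diagonal. -/
structure GraphNA where
  n : ℕ
  A : Matrix (Fin n) (Fin n) ℝ
  A_symm : A.IsSymm
  A_01 : ∀ i j, A i j = 0 ∨ A i j = 1
  A_diag : ∀ i, A i i = 0

/-- Componentwise 1-norm of a matrix. -/
def onorm {m n : ℕ} (M : Matrix (Fin m) (Fin n) ℝ) : ℝ :=
  ∑ i, ∑ j, |M i j|

/-- The top-left `m × n` block of an `(m+1) × (n+1)` matrix. -/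
def topLeft {m n : ℕ} (W : Matrix (Fin (m+1)) (Fin (n+1)) ℝ) :
    Matrix (Fin m) (Fin n) ℝ :=
  fun i j => W i.castSucc j.castSucc

/-- The set `𝒲_{X,Y}` of binary assignment matrices: entries in `{0,1}`,
each of the first `nY` columns sums to 1, each of the first `nX` rows sums to 1,
and the bottom-right corner is 0. -/
def Wset (nX nY : ℕ) : Set (Matrix (Fin (nX+1)) (Fin (nY+1)) ℝ) :=
  {W | (∀ i j, W i j = 0 ∨ W i j = 1) ∧
    (∀ j : Fin nY, ∑ i, W i j.castSucc = 1) ∧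
    (∀ i : Fin nX, ∑ j, W i.castSucc j = 1) ∧
    W (Fin.last nX) (Fin.last nY) = 0}

/-- The relaxed set `𝒲̄_{X,Y}`: nonnegative entries, with the same row/column sum
constraints and zero bottom-right corner. -/
def WbarSet (nX nY : ℕ) : Set (Matrix (Fin (nX+1)) (Fin (nY+1)) ℝ) :=
  {W | (∀ i j, 0 ≤ W i j) ∧
    (∀ j : Fin nY, ∑ i, W i j.castSucc = 1) ∧
    (∀ i : Fin nX, ∑ j, W i.castSucc j = 1) ∧
    W (Fin.last nX) (Fin.last nY) = 0}

/-- The edge mismatch cost `e_{X,Y}(W)^p = (ε^p/2)‖A_X W' − W' A_Y‖`. -/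
noncomputable def edgeCost (p ε : ℝ) (X Y : GraphNA)
    (W : Matrix (Fin (X.n+1)) (Fin (Y.n+1)) ℝ) : ℝ :=
  ε ^ p / 2 * onorm (X.A * topLeft W - topLeft W * Y.A)

/-- The unassignment cost `(c^p/2)(Σ_i W(i, n_Y+1) + Σ_j W(n_X+1, j))`. -/
noncomputable def missFalseCost (p c : ℝ) (X Y : GraphNA)
    (W : Matrix (Fin (X.n+1)) (Fin (Y.n+1)) ℝ) : ℝ :=
  c ^ p / 2 * ((∑ i : Fin X.n, W i.castSucc (Fin.last Y.n)) +
    (∑ j : Fin Y.n, W (Fin.last X.n) j.castSucc))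

/-- The cost matrix `D_{X,Y}` for the identically-zero base distance `d(·,·) = 0`:
localisation entries are `0^p = 0`, unassignment entries are `c^p/2`, and the
bottom-right corner is 0. -/
noncomputable def Dmat0 (p c : ℝ) (X Y : GraphNA) :
    Matrix (Fin (X.n+1)) (Fin (Y.n+1)) ℝ :=
  fun i j =>
    if (i : ℕ) < X.n then
      if (j : ℕ) < Y.n then 0
      else c ^ p / 2
    else if (j : ℕ) < Y.n then c ^ p / 2 else 0

/-- The LP graph GOSPA distance with identically-zero base distance. -/
noncomputable def gospaLP0 (p c ε : ℝ) (X Y : GraphNA) : ℝ :=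
  sInf {v | ∃ W ∈ WbarSet X.n Y.n,
    v = Matrix.trace ((Dmat0 p c X Y)ᵀ * W) + edgeCost p ε X Y W} ^ (1 / p)

/-- The graph GOSPA pseudometric `d̃^{(c,ε)}` for graphs without node attributes
(LP relaxation). -/
noncomputable def dtilde (p c ε : ℝ) (X Y : GraphNA) : ℝ :=
  sInf {v | ∃ W ∈ WbarSet X.n Y.n,
    v = missFalseCost p c X Y W + edgeCost p ε X Y W} ^ (1 / p)

lemma onorm_nonneg {m n : ℕ} (M : Matrix (Fin m) (Fin n) ℝ) : 0 ≤ onorm M :=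
  Finset.sum_nonneg fun _ _ => Finset.sum_nonneg fun _ _ => abs_nonneg _

lemma onorm_neg {m n : ℕ} (M : Matrix (Fin m) (Fin n) ℝ) : onorm (-M) = onorm M := by
  unfold onorm; simp

lemma onorm_transpose {m n : ℕ} (M : Matrix (Fin m) (Fin n) ℝ) : onorm Mᵀ = onorm M := by
  unfold onorm; rw [Finset.sum_comm]; rfl

lemma onorm_add_le {m n : ℕ} (M N : Matrix (Fin m) (Fin n) ℝ) :
    onorm (M + N) ≤ onorm M + onorm N := by
  unfold onorm
  rw [← Finset.sum_add_distrib]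
  refine Finset.sum_le_sum fun i _ => ?_
  rw [← Finset.sum_add_distrib]
  exact Finset.sum_le_sum fun j _ => abs_add_le _ _

/-- `‖M * B‖ ≤ ‖M‖` when `B` is nonnegative with row sums `≤ 1`. -/
lemma onorm_mul_le_right {m k n : ℕ} (M : Matrix (Fin m) (Fin k) ℝ)
    (B : Matrix (Fin k) (Fin n) ℝ) (hB : ∀ i j, 0 ≤ B i j)
    (hrow : ∀ i, ∑ j, B i j ≤ 1) : onorm (M * B) ≤ onorm M := by
  unfold onorm
  have h1 : ∀ i ∈ Finset.univ, ∑ j : Fin n, |(M * B) i j| ≤ ∑ a : Fin k, |M i a| := by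
    intro i _
    have h2 : ∀ j : Fin n, |(M * B) i j| ≤ ∑ a : Fin k, |M i a| * B a j := by
      intro j
      calc |(M * B) i j| = |∑ a, M i a * B a j| := rfl
        _ ≤ ∑ a, |M i a * B a j| := Finset.abs_sum_le_sum_abs _ _
        _ = ∑ a, |M i a| * B a j := by
            refine Finset.sum_congr rfl fun a _ => ?_
            rw [abs_mul, abs_of_nonneg (hB a j)]
    calc ∑ j : Fin n, |(M * B) i j| ≤ ∑ j : Fin n, ∑ a : Fin k, |M i a| * B a j :=
          Finset.sum_le_sum fun j _ => h2 j
      _ = ∑ a : Fin k, |M i a| * ∑ j : Fin n, B a j := by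
          rw [Finset.sum_comm]
          exact Finset.sum_congr rfl fun a _ => (Finset.mul_sum _ _ _).symm
      _ ≤ ∑ a : Fin k, |M i a| * 1 := by
          refine Finset.sum_le_sum fun a _ => ?_
          exact mul_le_mul_of_nonneg_left (hrow a) (abs_nonneg _)
      _ = ∑ a : Fin k, |M i a| := by simp
  exact Finset.sum_le_sum h1

/-- `‖A * N‖ ≤ ‖N‖` when `A` is nonnegative with column sums `≤ 1`. -/
lemma onorm_mul_le_left {m k n : ℕ} (A : Matrix (Fin m) (Fin k) ℝ)
    (N : Matrix (Fin k) (Fin n) ℝ) (hA : ∀ i j, 0 ≤ A i j)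
    (hcol : ∀ j, ∑ i, A i j ≤ 1) : onorm (A * N) ≤ onorm N := by
  have := onorm_mul_le_right Nᵀ Aᵀ (fun i j => hA j i) hcol
  rw [← Matrix.transpose_mul] at this
  rwa [onorm_transpose, onorm_transpose] at this

lemma real_rpow_add_le {a b r : ℝ} (ha : 0 ≤ a) (hb : 0 ≤ b) (hr0 : 0 ≤ r) (hr1 : r ≤ 1) :
    (a + b) ^ r ≤ a ^ r + b ^ r := by
  lift a to NNReal using ha
  lift b to NNReal using hb
  have := NNReal.rpow_add_le_add_rpow a b hr0 hr1
  exact_mod_cast this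

lemma trace_Dmat0 (p c : ℝ) (X Y : GraphNA)
    (W : Matrix (Fin (X.n+1)) (Fin (Y.n+1)) ℝ) :
    Matrix.trace ((Dmat0 p c X Y)ᵀ * W) = missFalseCost p c X Y W := by
  have h : Matrix.trace ((Dmat0 p c X Y)ᵀ * W)
      = ∑ j : Fin (Y.n+1), ∑ i : Fin (X.n+1), Dmat0 p c X Y i j * W i j := by
    simp [Matrix.trace, Matrix.diag, Matrix.mul_apply]
  rw [h]
  rw [Fin.sum_univ_castSucc (n := Y.n)]
  have hinner : ∀ j : Fin Y.n,
      ∑ i : Fin (X.n+1), Dmat0 p c X Y i j.castSucc * W i j.castSucc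
        = c ^ p / 2 * W (Fin.last X.n) j.castSucc := by
    intro j
    rw [Fin.sum_univ_castSucc (n := X.n)]
    simp [Dmat0, Fin.is_lt]
  have hlast : ∑ i : Fin (X.n+1), Dmat0 p c X Y i (Fin.last Y.n) * W i (Fin.last Y.n)
      = ∑ i : Fin X.n, c ^ p / 2 * W i.castSucc (Fin.last Y.n) := by
    rw [Fin.sum_univ_castSucc (n := X.n)]
    simp [Dmat0, Fin.is_lt]
  rw [hlast, Finset.sum_congr rfl fun j _ => hinner j]
  unfold missFalseCost
  rw [mul_add, Finset.mul_sum, Finset.mul_sum]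
  ring
/-- The set of achievable total costs. -/
def costSet (p c ε : ℝ) (X Y : GraphNA) : Set ℝ :=
  {v | ∃ W ∈ WbarSet X.n Y.n, v = missFalseCost p c X Y W + edgeCost p ε X Y W}

lemma dtilde_eq_costSet (p c ε : ℝ) (X Y : GraphNA) :
    dtilde p c ε X Y = sInf (costSet p c ε X Y) ^ (1/p) := rfl

lemma missFalseCost_nonneg {p c : ℝ} (hc : 0 ≤ c) (X Y : GraphNA)
    {W : Matrix (Fin (X.n+1)) (Fin (Y.n+1)) ℝ} (hW : ∀ i j, 0 ≤ W i j) :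
    0 ≤ missFalseCost p c X Y W := by
  unfold missFalseCost
  have h1 : (0:ℝ) ≤ c ^ p / 2 := div_nonneg (Real.rpow_nonneg hc p) (by norm_num)
  refine mul_nonneg h1 (add_nonneg ?_ ?_) <;>
    exact Finset.sum_nonneg fun _ _ => hW _ _

lemma edgeCost_nonneg {p ε : ℝ} (hε : 0 ≤ ε) (X Y : GraphNA)
    (W : Matrix (Fin (X.n+1)) (Fin (Y.n+1)) ℝ) :
    0 ≤ edgeCost p ε X Y W := by
  unfold edgeCost
  exact mul_nonneg (div_nonneg (Real.rpow_nonneg hε p) (by norm_num)) (onorm_nonneg _)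

lemma costSet_nonneg {p c ε : ℝ} (hc : 0 ≤ c) (hε : 0 ≤ ε) (X Y : GraphNA) :
    ∀ v ∈ costSet p c ε X Y, (0:ℝ) ≤ v := by
  rintro v ⟨W, hW, rfl⟩
  exact add_nonneg (missFalseCost_nonneg hc X Y hW.1) (edgeCost_nonneg hε X Y W)

lemma costSet_bddBelow {p c ε : ℝ} (hc : 0 ≤ c) (hε : 0 ≤ ε) (X Y : GraphNA) :
    BddBelow (costSet p c ε X Y) :=
  ⟨0, fun v hv => costSet_nonneg hc hε X Y v hv⟩

lemma costSet_nonempty (p c ε : ℝ) (X Y : GraphNA) :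
    (costSet p c ε X Y).Nonempty := by
  classical
  set W0 : Matrix (Fin (X.n+1)) (Fin (Y.n+1)) ℝ :=
    fun i j => if (i:ℕ) < X.n then (if (j:ℕ) < Y.n then 0 else 1)
      else (if (j:ℕ) < Y.n then 1 else 0) with hW0
  have hmem : W0 ∈ WbarSet X.n Y.n := by
    refine ⟨fun i j => ?_, fun j => ?_, fun i => ?_, ?_⟩
    · simp only [hW0]; split <;> split <;> norm_num
    · rw [Fin.sum_univ_castSucc (n := X.n)]
      simp [hW0, Fin.is_lt]
    · rw [Fin.sum_univ_castSucc (n := Y.n)]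
      simp [hW0, Fin.is_lt]
    · simp [hW0]
  refine ⟨_, W0, hmem, rfl⟩

lemma sInf_costSet_nonneg {p c ε : ℝ} (hc : 0 ≤ c) (hε : 0 ≤ ε) (X Y : GraphNA) :
    0 ≤ sInf (costSet p c ε X Y) :=
  le_csInf (costSet_nonempty p c ε X Y) (costSet_nonneg hc hε X Y)
lemma zero_mem_costSet (p c ε : ℝ) (X : GraphNA) : (0:ℝ) ∈ costSet p c ε X X := by
  classical
  set W : Matrix (Fin (X.n+1)) (Fin (X.n+1)) ℝ :=
    fun i j => if (i:ℕ) = (j:ℕ) ∧ (i:ℕ) < X.n then 1 else 0 with hWdef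
  have hmem : W ∈ WbarSet X.n X.n := by
    refine ⟨fun i j => ?_, fun j => ?_, fun i => ?_, ?_⟩
    · simp only [hWdef]; split <;> norm_num
    · rw [Fin.sum_univ_castSucc (n := X.n)]
      have hlast : W (Fin.last X.n) j.castSucc = 0 := by
        simp only [hWdef, Fin.val_last, Fin.coe_castSucc, ite_eq_right_iff, and_imp]
        intro _ h; exact absurd h (lt_irrefl _)
      have hmain : ∀ i : Fin X.n, W i.castSucc j.castSucc
          = if i = j then (1:ℝ) else 0 := by
        intro i
        simp only [hWdef, Fin.coe_castSucc]
        by_cases h : i = j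
        · simp [h, Fin.is_lt]
        · have hne : ¬((i:ℕ) = (j:ℕ)) := fun hh => h (Fin.ext hh)
          simp [hne, h]
      rw [hlast, Finset.sum_congr rfl fun i _ => hmain i]
      simp
    · rw [Fin.sum_univ_castSucc (n := X.n)]
      have hlast : W i.castSucc (Fin.last X.n) = 0 := by
        simp only [hWdef, Fin.val_last, Fin.coe_castSucc, ite_eq_right_iff, and_imp]
        intro h _; exact absurd h (Nat.ne_of_lt i.is_lt)
      have hmain : ∀ j : Fin X.n, W i.castSucc j.castSucc
          = if j = i then (1:ℝ) else 0 := by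
        intro j
        simp only [hWdef, Fin.coe_castSucc]
        by_cases h : j = i
        · simp [h, Fin.is_lt]
        · have hne : ¬((i:ℕ) = (j:ℕ)) := fun hh => h (Fin.ext hh.symm)
          simp [hne, h]
      rw [hlast, Finset.sum_congr rfl fun j _ => hmain j]
      simp
    · simp [hWdef]
  have htl : topLeft W = (1 : Matrix (Fin X.n) (Fin X.n) ℝ) := by
    ext i j
    simp [topLeft, hWdef, Matrix.one_apply, Fin.is_lt, Fin.ext_iff]
  have hedge : edgeCost p ε X X W = 0 := by
    unfold edgeCost
    rw [htl]
    simp [onorm]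
  have hmiss : missFalseCost p c X X W = 0 := by
    unfold missFalseCost
    have h1 : ∀ i : Fin X.n, W i.castSucc (Fin.last X.n) = 0 := by
      intro i
      simp only [hWdef, Fin.coe_castSucc, Fin.val_last, ite_eq_right_iff, and_imp]
      intro h _
      exact absurd h (Nat.ne_of_lt i.is_lt)
    have h2 : ∀ j : Fin X.n, W (Fin.last X.n) j.castSucc = 0 := by
      intro j
      simp only [hWdef, Fin.val_last, Fin.coe_castSucc, ite_eq_right_iff, and_imp]
      intro _ h
      exact absurd h (lt_irrefl _)
    rw [Finset.sum_eq_zero fun i _ => h1 i, Finset.sum_eq_zero fun j _ => h2 j]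
    ring
  exact ⟨W, hmem, by rw [hmiss, hedge, add_zero]⟩

lemma transpose_mem_WbarSet {nX nY : ℕ} {W : Matrix (Fin (nX+1)) (Fin (nY+1)) ℝ}
    (hW : W ∈ WbarSet nX nY) : Wᵀ ∈ WbarSet nY nX := by
  obtain ⟨h0, hcol, hrow, hcorner⟩ := hW
  exact ⟨fun i j => h0 j i, fun j => hrow j, fun i => hcol i, hcorner⟩

lemma topLeft_transpose {m n : ℕ} (W : Matrix (Fin (m+1)) (Fin (n+1)) ℝ) :
    topLeft Wᵀ = (topLeft W)ᵀ := rfl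

lemma missFalseCost_transpose (p c : ℝ) (X Y : GraphNA)
    (W : Matrix (Fin (X.n+1)) (Fin (Y.n+1)) ℝ) :
    missFalseCost p c Y X Wᵀ = missFalseCost p c X Y W := by
  unfold missFalseCost
  rw [add_comm]
  rfl

lemma edgeCost_transpose (p ε : ℝ) (X Y : GraphNA)
    (W : Matrix (Fin (X.n+1)) (Fin (Y.n+1)) ℝ) :
    edgeCost p ε Y X Wᵀ = edgeCost p ε X Y W := by
  unfold edgeCost
  congr 1
  rw [topLeft_transpose]
  have : Y.A * (topLeft W)ᵀ - (topLeft W)ᵀ * X.A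
      = -((X.A * topLeft W - topLeft W * Y.A)ᵀ) := by
    rw [Matrix.transpose_sub, Matrix.transpose_mul, Matrix.transpose_mul,
      X.A_symm, Y.A_symm]
    exact (neg_sub _ _).symm
  rw [this, onorm_neg, onorm_transpose]

lemma costSet_symm (p c ε : ℝ) (X Y : GraphNA) :
    costSet p c ε X Y = costSet p c ε Y X := by
  ext v
  constructor
  · rintro ⟨W, hW, rfl⟩
    exact ⟨Wᵀ, transpose_mem_WbarSet hW,
      by rw [missFalseCost_transpose, edgeCost_transpose]⟩
  · rintro ⟨W, hW, rfl⟩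
    exact ⟨Wᵀ, transpose_mem_WbarSet hW,
      by rw [missFalseCost_transpose, edgeCost_transpose]⟩
/-- Composition of two transport plans. -/
noncomputable def compW {nX nZ nY : ℕ} (W1 : Matrix (Fin (nX+1)) (Fin (nZ+1)) ℝ)
    (W2 : Matrix (Fin (nZ+1)) (Fin (nY+1)) ℝ) : Matrix (Fin (nX+1)) (Fin (nY+1)) ℝ :=
  fun i j =>
    if (i:ℕ) < nX then
      if (j:ℕ) < nY then ∑ k : Fin nZ, W1 i k.castSucc * W2 k.castSucc j
      else (∑ k : Fin nZ, W1 i k.castSucc * W2 k.castSucc j) + W1 i (Fin.last nZ)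
    else
      if (j:ℕ) < nY then (∑ k : Fin nZ, W1 i k.castSucc * W2 k.castSucc j) + W2 (Fin.last nZ) j
      else 0

lemma compW_cc {nX nZ nY : ℕ} (W1 : Matrix (Fin (nX+1)) (Fin (nZ+1)) ℝ)
    (W2 : Matrix (Fin (nZ+1)) (Fin (nY+1)) ℝ) (i : Fin nX) (j : Fin nY) :
    compW W1 W2 i.castSucc j.castSucc
      = ∑ k : Fin nZ, W1 i.castSucc k.castSucc * W2 k.castSucc j.castSucc := by
  unfold compW; simp [Fin.is_lt]

lemma compW_cl {nX nZ nY : ℕ} (W1 : Matrix (Fin (nX+1)) (Fin (nZ+1)) ℝ)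
    (W2 : Matrix (Fin (nZ+1)) (Fin (nY+1)) ℝ) (i : Fin nX) :
    compW W1 W2 i.castSucc (Fin.last nY)
      = (∑ k : Fin nZ, W1 i.castSucc k.castSucc * W2 k.castSucc (Fin.last nY))
        + W1 i.castSucc (Fin.last nZ) := by
  unfold compW; simp [Fin.is_lt]

lemma compW_lc {nX nZ nY : ℕ} (W1 : Matrix (Fin (nX+1)) (Fin (nZ+1)) ℝ)
    (W2 : Matrix (Fin (nZ+1)) (Fin (nY+1)) ℝ) (j : Fin nY) :
    compW W1 W2 (Fin.last nX) j.castSucc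
      = (∑ k : Fin nZ, W1 (Fin.last nX) k.castSucc * W2 k.castSucc j.castSucc)
        + W2 (Fin.last nZ) j.castSucc := by
  unfold compW; simp [Fin.is_lt]

lemma compW_ll {nX nZ nY : ℕ} (W1 : Matrix (Fin (nX+1)) (Fin (nZ+1)) ℝ)
    (W2 : Matrix (Fin (nZ+1)) (Fin (nY+1)) ℝ) :
    compW W1 W2 (Fin.last nX) (Fin.last nY) = 0 := by
  unfold compW; simp

lemma compW_mem {nX nZ nY : ℕ} {W1 : Matrix (Fin (nX+1)) (Fin (nZ+1)) ℝ}
    {W2 : Matrix (Fin (nZ+1)) (Fin (nY+1)) ℝ}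
    (h1 : W1 ∈ WbarSet nX nZ) (h2 : W2 ∈ WbarSet nZ nY) :
    compW W1 W2 ∈ WbarSet nX nY := by
  obtain ⟨h1n, h1c, h1r, h1z⟩ := h1
  obtain ⟨h2n, h2c, h2r, h2z⟩ := h2
  refine ⟨?_, ?_, ?_, compW_ll W1 W2⟩
  · intro i j
    have hs : 0 ≤ ∑ k : Fin nZ, W1 i k.castSucc * W2 k.castSucc j :=
      Finset.sum_nonneg fun k _ => mul_nonneg (h1n _ _) (h2n _ _)
    unfold compW
    split
    · split
      · exact hs
      · exact add_nonneg hs (h1n _ _)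
    · split
      · exact add_nonneg hs (h2n _ _)
      · exact le_refl 0
  · intro j
    rw [Fin.sum_univ_castSucc (n := nX),
      Finset.sum_congr rfl fun i _ => compW_cc W1 W2 i j, compW_lc W1 W2 j,
      ← add_assoc]
    have hswap :
        (∑ i : Fin nX, ∑ k : Fin nZ, W1 i.castSucc k.castSucc * W2 k.castSucc j.castSucc)
          + ∑ k : Fin nZ, W1 (Fin.last nX) k.castSucc * W2 k.castSucc j.castSucc
        = ∑ k : Fin nZ, W2 k.castSucc j.castSucc := by
      rw [← Fin.sum_univ_castSucc
        (f := fun i => ∑ k : Fin nZ, W1 i k.castSucc * W2 k.castSucc j.castSucc),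
        Finset.sum_comm]
      refine Finset.sum_congr rfl fun k _ => ?_
      rw [← Finset.sum_mul, h1c k, one_mul]
    rw [hswap, ← Fin.sum_univ_castSucc (f := fun k => W2 k j.castSucc)]
    exact h2c j
  · intro i
    rw [Fin.sum_univ_castSucc (n := nY),
      Finset.sum_congr rfl fun j _ => compW_cc W1 W2 i j, compW_cl W1 W2 i,
      ← add_assoc]
    have hswap :
        (∑ j : Fin nY, ∑ k : Fin nZ, W1 i.castSucc k.castSucc * W2 k.castSucc j.castSucc)
          + ∑ k : Fin nZ, W1 i.castSucc k.castSucc * W2 k.castSucc (Fin.last nY)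
        = ∑ k : Fin nZ, W1 i.castSucc k.castSucc := by
      rw [Finset.sum_comm, ← Finset.sum_add_distrib]
      refine Finset.sum_congr rfl fun k _ => ?_
      rw [← Finset.mul_sum, ← mul_add,
        ← Fin.sum_univ_castSucc (f := fun j => W2 k.castSucc j), h2r k, mul_one]
    rw [hswap, ← Fin.sum_univ_castSucc (f := fun k => W1 i.castSucc k)]
    exact h1r i

lemma topLeft_compW {nX nZ nY : ℕ} (W1 : Matrix (Fin (nX+1)) (Fin (nZ+1)) ℝ)
    (W2 : Matrix (Fin (nZ+1)) (Fin (nY+1)) ℝ) :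
    topLeft (compW W1 W2) = topLeft W1 * topLeft W2 := by
  ext i j
  show compW W1 W2 i.castSucc j.castSucc = _
  rw [compW_cc, Matrix.mul_apply]
  rfl

lemma topLeft_row_sum_le {nZ nY : ℕ} {W2 : Matrix (Fin (nZ+1)) (Fin (nY+1)) ℝ}
    (h2 : W2 ∈ WbarSet nZ nY) (k : Fin nZ) : ∑ j : Fin nY, topLeft W2 k j ≤ 1 := by
  obtain ⟨h2n, _, h2r, _⟩ := h2
  have h := h2r k
  rw [Fin.sum_univ_castSucc] at h
  have h0 : 0 ≤ W2 k.castSucc (Fin.last nY) := h2n _ _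
  show ∑ j : Fin nY, W2 k.castSucc j.castSucc ≤ 1
  linarith

lemma topLeft_col_sum_le {nX nZ : ℕ} {W1 : Matrix (Fin (nX+1)) (Fin (nZ+1)) ℝ}
    (h1 : W1 ∈ WbarSet nX nZ) (k : Fin nZ) : ∑ i : Fin nX, topLeft W1 i k ≤ 1 := by
  obtain ⟨h1n, h1c, _, _⟩ := h1
  have h := h1c k
  rw [Fin.sum_univ_castSucc] at h
  have h0 : 0 ≤ W1 (Fin.last nX) k.castSucc := h1n _ _
  show ∑ i : Fin nX, W1 i.castSucc k.castSucc ≤ 1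
  linarith

lemma edgeCost_compW_le {p ε : ℝ} (hε : 0 ≤ ε) (X Z Y : GraphNA)
    {W1 : Matrix (Fin (X.n+1)) (Fin (Z.n+1)) ℝ}
    {W2 : Matrix (Fin (Z.n+1)) (Fin (Y.n+1)) ℝ}
    (h1 : W1 ∈ WbarSet X.n Z.n) (h2 : W2 ∈ WbarSet Z.n Y.n) :
    edgeCost p ε X Y (compW W1 W2) ≤ edgeCost p ε X Z W1 + edgeCost p ε Z Y W2 := by
  unfold edgeCost
  rw [topLeft_compW]
  set M1 := X.A * topLeft W1 - topLeft W1 * Z.A with hM1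
  set M2 := Z.A * topLeft W2 - topLeft W2 * Y.A with hM2
  have hdecomp : X.A * (topLeft W1 * topLeft W2) - topLeft W1 * topLeft W2 * Y.A
      = M1 * topLeft W2 + topLeft W1 * M2 := by
    rw [hM1, hM2, Matrix.sub_mul, Matrix.mul_sub, Matrix.mul_assoc, Matrix.mul_assoc,
      Matrix.mul_assoc]
    abel
  rw [hdecomp]
  have hb := onorm_add_le (M1 * topLeft W2) (topLeft W1 * M2)
  have hb1 : onorm (M1 * topLeft W2) ≤ onorm M1 :=
    onorm_mul_le_right _ _ (fun i j => h2.1 _ _) (topLeft_row_sum_le h2)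
  have hb2 : onorm (topLeft W1 * M2) ≤ onorm M2 :=
    onorm_mul_le_left _ _ (fun i j => h1.1 _ _) (topLeft_col_sum_le h1)
  have hnn : (0:ℝ) ≤ ε ^ p / 2 := div_nonneg (Real.rpow_nonneg hε p) (by norm_num)
  calc ε ^ p / 2 * onorm (M1 * topLeft W2 + topLeft W1 * M2)
      ≤ ε ^ p / 2 * (onorm M1 + onorm M2) :=
        mul_le_mul_of_nonneg_left (le_trans hb (add_le_add hb1 hb2)) hnn
    _ = ε ^ p / 2 * onorm M1 + ε ^ p / 2 * onorm M2 := mul_add _ _ _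

lemma missFalseCost_compW_le {p c : ℝ} (hc : 0 ≤ c) (X Z Y : GraphNA)
    {W1 : Matrix (Fin (X.n+1)) (Fin (Z.n+1)) ℝ}
    {W2 : Matrix (Fin (Z.n+1)) (Fin (Y.n+1)) ℝ}
    (h1 : W1 ∈ WbarSet X.n Z.n) (h2 : W2 ∈ WbarSet Z.n Y.n) :
    missFalseCost p c X Y (compW W1 W2)
      ≤ missFalseCost p c X Z W1 + missFalseCost p c Z Y W2 := by
  obtain ⟨h1n, h1c, h1r, h1z⟩ := h1
  obtain ⟨h2n, h2c, h2r, h2z⟩ := h2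
  have hcp : (0:ℝ) ≤ c ^ p / 2 := div_nonneg (Real.rpow_nonneg hc p) (by norm_num)
  unfold missFalseCost
  rw [← mul_add]
  refine mul_le_mul_of_nonneg_left ?_ hcp
  have hcol : ∀ k : Fin Z.n, ∑ i : Fin X.n, W1 i.castSucc k.castSucc ≤ 1 := by
    intro k
    have h := h1c k
    rw [Fin.sum_univ_castSucc] at h
    linarith [h1n (Fin.last X.n) k.castSucc]
  have hrow : ∀ k : Fin Z.n, ∑ j : Fin Y.n, W2 k.castSucc j.castSucc ≤ 1 := by
    intro k
    have h := h2r k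
    rw [Fin.sum_univ_castSucc] at h
    linarith [h2n k.castSucc (Fin.last Y.n)]
  have hA : ∑ i : Fin X.n, compW W1 W2 i.castSucc (Fin.last Y.n)
      ≤ (∑ k : Fin Z.n, W2 k.castSucc (Fin.last Y.n))
        + ∑ i : Fin X.n, W1 i.castSucc (Fin.last Z.n) := by
    calc ∑ i : Fin X.n, compW W1 W2 i.castSucc (Fin.last Y.n)
        = ∑ i : Fin X.n, ((∑ k : Fin Z.n,
            W1 i.castSucc k.castSucc * W2 k.castSucc (Fin.last Y.n))
            + W1 i.castSucc (Fin.last Z.n)) :=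
          Finset.sum_congr rfl fun i _ => compW_cl W1 W2 i
      _ = (∑ i : Fin X.n, ∑ k : Fin Z.n,
            W1 i.castSucc k.castSucc * W2 k.castSucc (Fin.last Y.n))
            + ∑ i : Fin X.n, W1 i.castSucc (Fin.last Z.n) := Finset.sum_add_distrib
      _ = (∑ k : Fin Z.n, (∑ i : Fin X.n, W1 i.castSucc k.castSucc)
            * W2 k.castSucc (Fin.last Y.n))
            + ∑ i : Fin X.n, W1 i.castSucc (Fin.last Z.n) := by
          rw [Finset.sum_comm]
          congr 1
          exact Finset.sum_congr rfl fun k _ => (Finset.sum_mul _ _ _).symm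
      _ ≤ (∑ k : Fin Z.n, 1 * W2 k.castSucc (Fin.last Y.n))
            + ∑ i : Fin X.n, W1 i.castSucc (Fin.last Z.n) :=
          add_le_add_left (Finset.sum_le_sum fun k _ =>
            mul_le_mul_of_nonneg_right (hcol k) (h2n _ _)) _
      _ = (∑ k : Fin Z.n, W2 k.castSucc (Fin.last Y.n))
            + ∑ i : Fin X.n, W1 i.castSucc (Fin.last Z.n) := by simp
  have hB : ∑ j : Fin Y.n, compW W1 W2 (Fin.last X.n) j.castSucc
      ≤ (∑ k : Fin Z.n, W1 (Fin.last X.n) k.castSucc)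
        + ∑ j : Fin Y.n, W2 (Fin.last Z.n) j.castSucc := by
    calc ∑ j : Fin Y.n, compW W1 W2 (Fin.last X.n) j.castSucc
        = ∑ j : Fin Y.n, ((∑ k : Fin Z.n,
            W1 (Fin.last X.n) k.castSucc * W2 k.castSucc j.castSucc)
            + W2 (Fin.last Z.n) j.castSucc) :=
          Finset.sum_congr rfl fun j _ => compW_lc W1 W2 j
      _ = (∑ j : Fin Y.n, ∑ k : Fin Z.n,
            W1 (Fin.last X.n) k.castSucc * W2 k.castSucc j.castSucc)
            + ∑ j : Fin Y.n, W2 (Fin.last Z.n) j.castSucc := Finset.sum_add_distrib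
      _ = (∑ k : Fin Z.n, W1 (Fin.last X.n) k.castSucc
            * ∑ j : Fin Y.n, W2 k.castSucc j.castSucc)
            + ∑ j : Fin Y.n, W2 (Fin.last Z.n) j.castSucc := by
          rw [Finset.sum_comm]
          congr 1
          exact Finset.sum_congr rfl fun k _ => (Finset.mul_sum _ _ _).symm
      _ ≤ (∑ k : Fin Z.n, W1 (Fin.last X.n) k.castSucc * 1)
            + ∑ j : Fin Y.n, W2 (Fin.last Z.n) j.castSucc :=
          add_le_add_left (Finset.sum_le_sum fun k _ =>
            mul_le_mul_of_nonneg_left (hrow k) (h1n _ _)) _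
      _ = (∑ k : Fin Z.n, W1 (Fin.last X.n) k.castSucc)
            + ∑ j : Fin Y.n, W2 (Fin.last Z.n) j.castSucc := by simp
  linarith

lemma sInf_costSet_triangle {p c ε : ℝ} (hc : 0 ≤ c) (hε : 0 ≤ ε) (X Z Y : GraphNA) :
    sInf (costSet p c ε X Y) ≤ sInf (costSet p c ε X Z) + sInf (costSet p c ε Z Y) := by
  have key : ∀ a ∈ costSet p c ε X Z, ∀ b ∈ costSet p c ε Z Y,
      sInf (costSet p c ε X Y) ≤ a + b := by
    rintro a ⟨W1, h1, rfl⟩ b ⟨W2, h2, rfl⟩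
    have hmem : missFalseCost p c X Y (compW W1 W2) + edgeCost p ε X Y (compW W1 W2)
        ∈ costSet p c ε X Y := ⟨compW W1 W2, compW_mem h1 h2, rfl⟩
    have hle := csInf_le (costSet_bddBelow hc hε X Y) hmem
    have hm := missFalseCost_compW_le (p := p) hc X Z Y h1 h2
    have he := edgeCost_compW_le (p := p) hε X Z Y h1 h2
    linarith
  have h1ne := costSet_nonempty p c ε X Z
  have h2ne := costSet_nonempty p c ε Z Y
  have hmain : sInf (costSet p c ε X Y) - sInf (costSet p c ε Z Y)
      ≤ sInf (costSet p c ε X Z) := by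
    refine le_csInf h1ne fun a ha => ?_
    have : sInf (costSet p c ε X Y) - a ≤ sInf (costSet p c ε Z Y) :=
      le_csInf h2ne fun b hb => by linarith [key a ha b hb]
    linarith
  linarith
/-- If the base distance is identically zero, the LP graph GOSPA
distance reduces to
`d̃^{(c,ε)}(X,Y) = min_{W∈𝒲̄_{X,Y}} ((c^p/2)(Σ_i W(i,n_Y+1) + Σ_j W(n_X+1,j)) + e_{X,Y}(W)^p)^{1/p}`,
and `d̃^{(c,ε)}` is a pseudometric on graphs: `d̃(X,X) = 0`, symmetry, and the triangle
inequality hold. -/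
theorem dtilde_is_pseudometric (p c ε : ℝ) (hp : 1 ≤ p) (hc : 0 < c) (hε : 0 < ε) :
    (∀ X Y : GraphNA, gospaLP0 p c ε X Y = dtilde p c ε X Y) ∧
    (∀ X : GraphNA, dtilde p c ε X X = 0) ∧
    (∀ X Y : GraphNA, dtilde p c ε X Y = dtilde p c ε Y X) ∧
    (∀ X Y Z : GraphNA,
      dtilde p c ε X Y ≤ dtilde p c ε X Z + dtilde p c ε Z Y) := by
  refine ⟨?_, ?_, ?_, ?_⟩
  · intro X Y
    have hset : {v | ∃ W ∈ WbarSet X.n Y.n,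
        v = Matrix.trace ((Dmat0 p c X Y)ᵀ * W) + edgeCost p ε X Y W}
        = costSet p c ε X Y := by
      ext v
      constructor
      · rintro ⟨W, hW, rfl⟩; exact ⟨W, hW, by rw [trace_Dmat0]⟩
      · rintro ⟨W, hW, rfl⟩; exact ⟨W, hW, by rw [trace_Dmat0]⟩
    unfold gospaLP0
    rw [hset]
    rfl
  · intro X
    rw [dtilde_eq_costSet]
    have h0 : sInf (costSet p c ε X X) = 0 :=
      le_antisymm (csInf_le (costSet_bddBelow hc.le hε.le X X) (zero_mem_costSet p c ε X))
        (sInf_costSet_nonneg hc.le hε.le X X)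
    rw [h0]
    exact Real.zero_rpow (one_div_ne_zero (by linarith))
  · intro X Y
    rw [dtilde_eq_costSet, dtilde_eq_costSet, costSet_symm]
  · intro X Y Z
    rw [dtilde_eq_costSet, dtilde_eq_costSet, dtilde_eq_costSet]
    have hp0 : (0:ℝ) < p := by linarith
    have h1 : 0 ≤ sInf (costSet p c ε X Y) := sInf_costSet_nonneg hc.le hε.le X Y
    have h2 : 0 ≤ sInf (costSet p c ε X Z) := sInf_costSet_nonneg hc.le hε.le X Z
    have h3 : 0 ≤ sInf (costSet p c ε Z Y) := sInf_costSet_nonneg hc.le hε.le Z Y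
    have htri := sInf_costSet_triangle (p := p) hc.le hε.le X Z Y
    have hr0 : (0:ℝ) ≤ 1/p := by positivity
    have hr1 : (1:ℝ)/p ≤ 1 := by rw [div_le_one hp0]; linarith
    calc sInf (costSet p c ε X Y) ^ (1/p)
        ≤ (sInf (costSet p c ε X Z) + sInf (costSet p c ε Z Y)) ^ (1/p) :=
          Real.rpow_le_rpow h1 htri hr0
      _ ≤ sInf (costSet p c ε X Z) ^ (1/p) + sInf (costSet p c ε Z Y) ^ (1/p) :=
          real_rpow_add_le h2 h3 hr0 hr1

end GraphGOSPA
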